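/- Distribution preservation of the SpecTr-GBV single-iteration output (Theorem 4.2, closed form): For s ∈ Ω^L write s^j for its length-j prefix, S_j(s) := Σ_{x∈Ω} w(s^j·x), and T_i(s) := Π_{j=i}^{L−1} [ w(s^{j+1}) / S_j(s) ], with the convention that a product containing a factor with zero denominator equals 0 and the empty product equals 1. Define μ(s) := α(s) + Σ_{i=0}^{L−1} ( S_i(s) − w(s^i) )·T_i(s). Then μ(s) = q(s) for every s ∈ Ω^L; in particular μ is a probability mass function on Ω^L equal to the target block distribution q. -/

import Mathlib

attribute [local instance] Classical.propDecidable

noncomputable section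

/-- `p(s^i)`: mass under the block distribution `p` of the length-`i` prefix `s^i`
of `s` (for `i ≤ L`). -/
def prefMass {Ω : Type*} [Fintype Ω] {L : ℕ} (p : (Fin L → Ω) → ℝ)
    (s : Fin L → Ω) (i : ℕ) : ℝ :=
  ∑ t : Fin L → Ω, if (∀ j : Fin L, (j : ℕ) < i → t j = s j) then p t else 0

/-- `p(s^i·a)`: mass under `p` of the length-`(i+1)` string obtained by appending
the token `a` to the length-`i` prefix `s^i` of `s` (for `i < L`). -/
def extMass {Ω : Type*} [Fintype Ω] {L : ℕ} (p : (Fin L → Ω) → ℝ)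
    (s : Fin L → Ω) (i : ℕ) (a : Ω) : ℝ :=
  ∑ t : Fin L → Ω,
    if ((∀ j : Fin L, (j : ℕ) < i → t j = s j) ∧ ∀ h : i < L, t ⟨i, h⟩ = a) then p t
    else 0

/-- `w(s^i) := q(s^i)·(1 − min{p(s^i)/q(s^i), 1})^K` (equal to `0` when `q(s^i) = 0`). -/
def wM {Ω : Type*} [Fintype Ω] {L : ℕ} (p q : (Fin L → Ω) → ℝ) (K : ℕ)
    (s : Fin L → Ω) (i : ℕ) : ℝ :=
  prefMass q s i * (1 - min (prefMass p s i / prefMass q s i) 1) ^ K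

/-- `w(s^i·a)`, i.e. `w` of the one-token extension of the prefix `s^i` by `a`. -/
def wE {Ω : Type*} [Fintype Ω] {L : ℕ} (p q : (Fin L → Ω) → ℝ) (K : ℕ)
    (s : Fin L → Ω) (i : ℕ) (a : Ω) : ℝ :=
  extMass q s i a * (1 - min (extMass p s i a / extMass q s i a) 1) ^ K

/-- `S_i(s) := Σ_{a∈Ω} w(s^i·a)`. -/
def SS {Ω : Type*} [Fintype Ω] {L : ℕ} (p q : (Fin L → Ω) → ℝ) (K : ℕ)
    (s : Fin L → Ω) (i : ℕ) : ℝ :=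
  ∑ a : Ω, wE p q K s i a

/-- `T_i(s) := Π_{j=i}^{L−1} w(s^{j+1}) / S_j(s)` (in `ℝ`, division by zero is
zero, so a factor with zero denominator makes the product `0`, and the empty
product is `1`, matching the stated conventions). -/
def TT {Ω : Type*} [Fintype Ω] {L : ℕ} (p q : (Fin L → Ω) → ℝ) (K : ℕ)
    (s : Fin L → Ω) (i : ℕ) : ℝ :=
  ∏ j ∈ Finset.Ico i L, (wM p q K s (j + 1) / SS p q K s j)

/-- The law `μ` of the concatenated single-iteration output of SpecTr-GBV:
`μ(s) := α(s) + Σ_{i=0}^{L−1} (S_i(s) − w(s^i))·T_i(s)` with `α(s) = q(s) − w(s^L)`. -/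
def muGBV {Ω : Type*} [Fintype Ω] {L : ℕ} (p q : (Fin L → Ω) → ℝ) (K : ℕ)
    (s : Fin L → Ω) : ℝ :=
  (q s - wM p q K s L) +
    ∑ i ∈ Finset.range L, (SS p q K s i - wM p q K s i) * TT p q K s i


section AuxSpecTr

variable {Ω : Type*} [Fintype Ω] {L K : ℕ}

lemma wE_nonneg' (p q : (Fin L → Ω) → ℝ) (hq0 : ∀ t, 0 ≤ q t)
    (s : Fin L → Ω) (i : ℕ) (a : Ω) : 0 ≤ wE p q K s i a := by
  unfold wE
  apply mul_nonneg
  · exact Finset.sum_nonneg fun t _ => by split <;> simp [hq0]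
  · apply pow_nonneg
    have := min_le_right (extMass p s i a / extMass q s i a) (1 : ℝ)
    linarith

lemma prefMass_succ' (p : (Fin L → Ω) → ℝ) (s : Fin L → Ω) (i : ℕ) (h : i < L) :
    prefMass p s (i + 1) = extMass p s i (s ⟨i, h⟩) := by
  unfold prefMass extMass
  refine Finset.sum_congr rfl fun t _ => if_congr ?_ rfl rfl
  constructor
  · intro H
    exact ⟨fun j hj => H j (Nat.lt_succ_of_lt hj),
      fun h' => H ⟨i, h⟩ (Nat.lt_succ_self i)⟩
  · rintro ⟨H1, H2⟩ j hj
    rcases Nat.lt_succ_iff_lt_or_eq.mp hj with hj' | hj'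
    · exact H1 j hj'
    · have : j = ⟨i, h⟩ := Fin.ext hj'
      rw [this]; exact H2 h

lemma prefMass_zero' (p : (Fin L → Ω) → ℝ) (s : Fin L → Ω) :
    prefMass p s 0 = ∑ t : Fin L → Ω, p t := by
  unfold prefMass
  exact Finset.sum_congr rfl fun t _ =>
    if_pos fun j hj => absurd hj (Nat.not_lt_zero _)

end AuxSpecTr

/-- Theorem 4.2 (distribution preservation, closed form): the single-iteration
output law `μ` of SpecTr-GBV equals the target block distribution `q`; in
particular `μ` is a probability mass function on `Ω^L`. -/
theorem muGBV_eq_target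
    {Ω : Type*} [Fintype Ω] [Nonempty Ω] {L K : ℕ} (hL : 1 ≤ L) (hK : 1 ≤ K)
    (p q : (Fin L → Ω) → ℝ)
    (hp0 : ∀ s, 0 ≤ p s) (hp1 : ∑ s : Fin L → Ω, p s = 1)
    (hq0 : ∀ s, 0 ≤ q s) (hq1 : ∑ s : Fin L → Ω, q s = 1) :
    (∀ s : Fin L → Ω, muGBV p q K s = q s) ∧
    (∀ s : Fin L → Ω, 0 ≤ muGBV p q K s) ∧
    (∑ s : Fin L → Ω, muGBV p q K s) = 1 := by
  have key : ∀ s : Fin L → Ω, muGBV p q K s = q s := by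
    intro s
    have hstep : ∀ i ∈ Finset.range L,
        (SS p q K s i - wM p q K s i) * TT p q K s i
          = wM p q K s (i + 1) * TT p q K s (i + 1)
            - wM p q K s i * TT p q K s i := by
      intro i hi
      have hiL : i < L := Finset.mem_range.mp hi
      have hw : wM p q K s (i + 1) = wE p q K s i (s ⟨i, hiL⟩) := by
        unfold wM wE
        rw [prefMass_succ' p s i hiL, prefMass_succ' q s i hiL]
      have hTT : TT p q K s i
          = (wM p q K s (i + 1) / SS p q K s i) * TT p q K s (i + 1) := by
        unfold TT
        exact Finset.prod_eq_prod_Ico_succ_bot hiL _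
      by_cases hS : SS p q K s i = 0
      · have hw0 : wM p q K s (i + 1) = 0 := by
          rw [hw]
          have := (Finset.sum_eq_zero_iff_of_nonneg
            (fun a _ => wE_nonneg' p q hq0 s i a)).mp hS
          exact this _ (Finset.mem_univ _)
        rw [hTT, hS, hw0]; simp
      · rw [hTT]; field_simp
    have hsum := Finset.sum_congr rfl hstep
    rw [muGBV, hsum,
      Finset.sum_range_sub (fun i => wM p q K s i * TT p q K s i)]
    have hTL : TT p q K s L = 1 := by simp [TT]
    have hw0 : wM p q K s 0 = 0 := by
      have hKpos : K ≠ 0 := by omega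
      simp [wM, prefMass_zero', hp1, hq1, zero_pow hKpos]
    rw [hTL, hw0]; ring
  refine ⟨key, fun s => (key s) ▸ hq0 s, by simp [key, hq1]⟩
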